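/- There exist universal constants C₁, C₂ > 0 with the following property. For every positive integer n, every ρ ∈ (0, 1/2), every ξ ∈ S^{n−1} and every g ∈ ℝⁿ, the random rounding η^ξ satisfies 𝔼⟨η^ξ, g⟩² ≤ C₁·⟨ξ, g⟩² + C₂·(ρ²/n)·|g|². -/

import Mathlib

open MeasureTheory Metric Set
open scoped RealInnerProductSpace

/-- The distribution of the random rounding of a real number `x` to the grid `sℤ`:
writing `x = s(k+p)` with `k = ⌊x/s⌋` and `p ∈ [0,1)`, it takes the value `sk` with
probability `1-p` and `s(k+1)` with probability `p`. -/
noncomputable def roundCoord (s x : ℝ) : Measure ℝ :=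
  ENNReal.ofReal (1 - Int.fract (x / s)) • Measure.dirac (s * ⌊x / s⌋) +
    ENNReal.ofReal (Int.fract (x / s)) • Measure.dirac (s * (⌊x / s⌋ + 1))

/-- The law of the random rounding `η^ξ` of `ξ ∈ ℝⁿ` to the lattice `(ρ/√n)ℤⁿ`,
with independent coordinates rounded as in `roundCoord`. -/
noncomputable def roundingLaw (n : ℕ) (ρ : ℝ) (ξ : EuclideanSpace ℝ (Fin n)) :
    Measure (EuclideanSpace ℝ (Fin n)) :=
  Measure.map (MeasurableEquiv.toLp 2 (Fin n → ℝ))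
    (Measure.pi fun i => roundCoord (ρ / Real.sqrt n) (ξ i))


lemma my_integrable_dirac {f : ℝ → ℝ} (hf : StronglyMeasurable f) (a : ℝ) :
    Integrable f (Measure.dirac a) := by
  refine ⟨hf.aestronglyMeasurable, ?_⟩
  rw [hasFiniteIntegral_def, lintegral_dirac]
  exact ENNReal.coe_lt_top

lemma my_integrable_roundCoord {f : ℝ → ℝ} (hf : StronglyMeasurable f) (s x : ℝ) :
    Integrable f (roundCoord s x) := by
  unfold roundCoord
  refine Integrable.add_measure ?_ ?_ <;>
    exact (my_integrable_dirac hf _).smul_measure ENNReal.ofReal_ne_top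

instance roundCoord_prob (s x : ℝ) : IsProbabilityMeasure (roundCoord s x) := by
  constructor
  unfold roundCoord
  have h0 : (0:ℝ) ≤ Int.fract (x / s) := Int.fract_nonneg _
  have h1 : Int.fract (x / s) ≤ 1 := le_of_lt (Int.fract_lt_one _)
  simp only [Measure.add_apply, Measure.smul_apply, Measure.dirac_apply_of_mem (Set.mem_univ _),
    smul_eq_mul, mul_one]
  rw [← ENNReal.ofReal_add (by linarith) h0]
  norm_num

lemma integral_roundCoord {f : ℝ → ℝ} (hf : StronglyMeasurable f) (s x : ℝ) :
    ∫ y, f y ∂(roundCoord s x) =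
      (1 - Int.fract (x / s)) * f (s * ⌊x / s⌋)
        + Int.fract (x / s) * f (s * (⌊x / s⌋ + 1)) := by
  have h0 : (0:ℝ) ≤ Int.fract (x / s) := Int.fract_nonneg _
  have h1 : Int.fract (x / s) ≤ 1 := le_of_lt (Int.fract_lt_one _)
  unfold roundCoord
  rw [integral_add_measure ((my_integrable_dirac hf _).smul_measure ENNReal.ofReal_ne_top)
    ((my_integrable_dirac hf _).smul_measure ENNReal.ofReal_ne_top),
    integral_smul_measure, integral_smul_measure, integral_dirac, integral_dirac,
    ENNReal.toReal_ofReal (by linarith), ENNReal.toReal_ofReal h0]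
  simp [smul_eq_mul]

lemma roundCoord_mean (s x : ℝ) (hs : s ≠ 0) :
    ∫ y, y ∂(roundCoord s x) = x := by
  rw [show (∫ (y : ℝ), y ∂roundCoord s x) = ∫ y, id y ∂(roundCoord s x) from rfl,
    integral_roundCoord stronglyMeasurable_id]
  simp only [id]
  have hx : x = s * ((⌊x / s⌋ : ℝ) + Int.fract (x / s)) := by
    rw [show (⌊x / s⌋ : ℝ) + Int.fract (x / s) = x / s by rw [Int.fract]; ring]
    field_simp
  set k : ℝ := (⌊x / s⌋ : ℝ)
  set p : ℝ := Int.fract (x / s)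
  rw [hx]; ring

lemma roundCoord_sq (s x : ℝ) (hs : s ≠ 0) :
    ∫ y, y ^ 2 ∂(roundCoord s x) =
      x ^ 2 + s ^ 2 * (Int.fract (x / s) * (1 - Int.fract (x / s))) := by
  rw [integral_roundCoord (f := fun y => y ^ 2) (by measurability)]
  have hx : x = s * ((⌊x / s⌋ : ℝ) + Int.fract (x / s)) := by
    rw [show (⌊x / s⌋ : ℝ) + Int.fract (x / s) = x / s by rw [Int.fract]; ring]
    field_simp
  set k : ℝ := (⌊x / s⌋ : ℝ)
  set p : ℝ := Int.fract (x / s)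
  rw [hx]; ring

lemma prod_if_pair {n : ℕ} (i j : Fin n) (hij : j ≠ i) (a b : Fin n → ℝ) :
    ∏ k, (if k = i then a k else if k = j then b k else 1) = a i * b j := by
  classical
  have h1 : ∀ k ∈ Finset.univ, k ∉ ({i, j} : Finset (Fin n)) →
      (if k = i then a k else if k = j then b k else 1) = 1 := by
    intro k _ hk
    simp only [Finset.mem_insert, Finset.mem_singleton, not_or] at hk
    simp [hk.1, hk.2]
  rw [← Finset.prod_subset (Finset.subset_univ _) h1, Finset.prod_pair (Ne.symm hij)]
  simp [hij]

lemma prod_if_single {n : ℕ} (i : Fin n) (a : Fin n → ℝ) :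
    ∏ k, (if k = i then a k else 1) = a i := by
  rw [Finset.prod_ite_eq' Finset.univ i a]
  simp

lemma pi_second_moment {n : ℕ} (s : ℝ) (ξ c : Fin n → ℝ) :
    ∫ x : Fin n → ℝ, (∑ i, x i * c i) ^ 2 ∂(Measure.pi fun i => roundCoord s (ξ i)) =
      ∑ i, ∑ j, c i * c j * (if i = j then (∫ y, y ^ 2 ∂roundCoord s (ξ i))
        else (∫ y, y ∂roundCoord s (ξ i)) * (∫ y, y ∂roundCoord s (ξ j))) := by
  classical
  set μ := fun i => roundCoord s (ξ i) with hμ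
  set f : Fin n → Fin n → Fin n → ℝ → ℝ :=
    fun i j k t => if k = i then (if j = i then t ^ 2 else t) else if k = j then t else 1
    with hf
  have hmeas : ∀ i j k, StronglyMeasurable (f i j k) := by
    intro i j k
    simp only [hf]
    split_ifs <;> measurability
  have hint : ∀ i j, Integrable (fun x : Fin n → ℝ => ∏ k, f i j k (x k)) (Measure.pi μ) :=
    fun i j => Integrable.fin_nat_prod (μ := μ) (f := f i j)
      (fun k => my_integrable_roundCoord (hmeas i j k) _ _)
  have hexpand : ∀ x : Fin n → ℝ,
      (∑ i, x i * c i) ^ 2 = ∑ i, ∑ j, c i * c j * ∏ k, f i j k (x k) := by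
    intro x
    rw [sq, Finset.sum_mul_sum]
    refine Finset.sum_congr rfl fun i _ => Finset.sum_congr rfl fun j _ => ?_
    by_cases hij : i = j
    · subst hij
      have : ∀ k, f i i k (x k) = if k = i then x k ^ 2 else 1 := by
        intro k; simp only [hf]; split_ifs <;> simp_all
      simp only [this]
      rw [prod_if_single i (fun k => x k ^ 2)]
      ring
    · have : ∀ k, f i j k (x k) =
          if k = i then x k else if k = j then x k else 1 := by
        intro k; simp only [hf]; split_ifs <;> simp_all
      simp only [this]
      rw [prod_if_pair i j (fun h => hij h.symm) (fun k => x k) (fun k => x k)]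
      ring
  simp only [hexpand]
  rw [integral_finset_sum _ (fun i _ => integrable_finset_sum _
    (fun j _ => (hint i j).const_mul _))]
  refine Finset.sum_congr rfl fun i _ => ?_
  rw [integral_finset_sum _ (fun j _ => (hint i j).const_mul _)]
  refine Finset.sum_congr rfl fun j _ => ?_
  rw [MeasureTheory.integral_const_mul]
  congr 1
  rw [show (∫ (a : Fin n → ℝ), ∏ k, f i j k (a k) ∂Measure.pi μ) = ∏ k, ∫ y, f i j k y ∂μ k
    from integral_fin_nat_prod_eq_prod (μ := μ) (f i j)]
  by_cases hij : i = j
  · subst hij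
    simp only [if_pos rfl]
    have : ∀ k, (∫ y, f i i k y ∂μ k) = if k = i then (∫ y, y ^ 2 ∂μ k) else 1 := by
      intro k
      by_cases hk : k = i <;> simp only [hf, hk, if_true, if_false, if_pos rfl] <;> simp
    simp only [this]
    exact prod_if_single i (fun k => ∫ y, y ^ 2 ∂μ k)
  · simp only [if_neg hij]
    have : ∀ k, (∫ y, f i j k y ∂μ k) =
        if k = i then (∫ y, y ∂μ k) else if k = j then (∫ y, y ∂μ k) else 1 := by
      intro k
      have hji : ¬ j = i := fun h => hij h.symm
      by_cases hki : k = i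
      · simp [hf, hki, hji]
      · by_cases hkj : k = j <;> simp [hf, hki, hkj, hji]
    simp only [this]
    exact prod_if_pair i j (fun h => hij h.symm) _ _


/-- second-moment comparison for the random rounding:
`𝔼⟨η^ξ, g⟩² ≤ C₁⟨ξ,g⟩² + C₂ (ρ²/n)|g|²`. -/
theorem rounding_second_moment_comparison :
    ∃ C₁ C₂ : ℝ, 0 < C₁ ∧ 0 < C₂ ∧
      ∀ n : ℕ, 0 < n → ∀ ρ : ℝ, ρ ∈ Set.Ioo (0 : ℝ) (1 / 2) →
        ∀ ξ : EuclideanSpace ℝ (Fin n), ‖ξ‖ = 1 →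
          ∀ g : EuclideanSpace ℝ (Fin n),
            (∫ η, ⟪η, g⟫ ^ 2 ∂(roundingLaw n ρ ξ)) ≤
              C₁ * ⟪ξ, g⟫ ^ 2 + C₂ * (ρ ^ 2 / n) * ‖g‖ ^ 2 := by
  refine ⟨1, 1, one_pos, one_pos, ?_⟩
  intro n hn ρ hρ ξ hξ g
  have hn0 : (0:ℝ) < n := Nat.cast_pos.mpr hn
  have hsqrt : (0:ℝ) < Real.sqrt n := Real.sqrt_pos.mpr hn0
  set s : ℝ := ρ / Real.sqrt n with hs
  have hs0 : s ≠ 0 := ne_of_gt (div_pos hρ.1 hsqrt)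
  have hs2 : s ^ 2 = ρ ^ 2 / n := by rw [hs, div_pow, Real.sq_sqrt hn0.le]
  have hinner : ∀ x : Fin n → ℝ,
      ⟪(MeasurableEquiv.toLp 2 (Fin n → ℝ)) x, g⟫ = ∑ i, x i * g i := by
    intro x
    simp [PiLp.inner_apply, RCLike.inner_apply, MeasurableEquiv.toLp_apply, mul_comm]
  rw [roundingLaw, integral_map_equiv]
  simp only [hinner]
  rw [pi_second_moment s (fun i => ξ i) (fun i => g i)]
  simp only [roundCoord_mean _ _ hs0, roundCoord_sq _ _ hs0]
  set p : Fin n → ℝ := fun i => Int.fract (ξ i / s) with hp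
  have hsum : (∑ i, ∑ j, g i * g j *
      (if i = j then ξ i ^ 2 + s ^ 2 * (p i * (1 - p i)) else ξ i * ξ j)) =
      (∑ i, ξ i * g i) ^ 2 + ∑ i, g i ^ 2 * (s ^ 2 * (p i * (1 - p i))) := by
    have step : ∀ i ∈ Finset.univ, ∀ j ∈ Finset.univ, g i * g j *
        (if i = j then ξ i ^ 2 + s ^ 2 * (p i * (1 - p i)) else ξ i * ξ j) =
        (ξ i * g i) * (ξ j * g j) +
          (if i = j then g i ^ 2 * (s ^ 2 * (p i * (1 - p i))) else 0) := by
      intro i _ j _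
      by_cases hij : i = j
      · subst hij; rw [if_pos rfl, if_pos rfl]; ring
      · simp only [if_neg hij]; ring
    rw [Finset.sum_congr rfl (fun i hi => Finset.sum_congr rfl (step i hi))]
    rw [Finset.sum_congr rfl (fun i _ => Finset.sum_add_distrib), Finset.sum_add_distrib,
      ← Finset.sum_mul_sum, ← sq]
    congr 1
    refine Finset.sum_congr rfl fun i _ => ?_
    rw [Finset.sum_ite_eq]
    simp
  rw [hsum]
  have hip : ⟪ξ, g⟫ = ∑ i, ξ i * g i := by simp [PiLp.inner_apply, RCLike.inner_apply, mul_comm]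
  have hg : ‖g‖ ^ 2 = ∑ i, g i ^ 2 := by
    simp only [EuclideanSpace.norm_eq, Real.norm_eq_abs, sq_abs]
    exact Real.sq_sqrt (by positivity)
  rw [hip, hg, one_mul, one_mul, ← hs2, Finset.mul_sum]
  have hbound : ∀ i ∈ Finset.univ, g i ^ 2 * (s ^ 2 * (p i * (1 - p i))) ≤ s ^ 2 * g i ^ 2 := by
    intro i _
    have h0 : 0 ≤ p i := Int.fract_nonneg _
    have h1 : p i < 1 := Int.fract_lt_one _
    have hA : (0:ℝ) ≤ g i ^ 2 * s ^ 2 := by positivity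
    nlinarith [mul_nonneg hA (sq_nonneg (p i - 1/2)), hA]
  linarith [Finset.sum_le_sum hbound]
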